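/- Given any locally bounded function ξ : [0,∞) → ℝ, there exists a C¹ function g : [0,∞) → ℝ which is C² outside an at most countable set E ⊂ [0,∞), such that g(t) ≥ ξ(2t) for all t ≥ 0, g'(t) > 0 for all t ≥ 0, g'(t) → +∞ as t → +∞, and g''(t) = O(g'(t)²) as t → +∞ on [0,∞) ∖ E. -/

import Mathlib

open Real Filter Set Topology

theorem exists_overtaking_function
    (ξ : ℝ → ℝ)
    (hξ : ∀ r ≥ (0:ℝ), ∃ M : ℝ, ∀ t ∈ Set.Icc (0:ℝ) r, |ξ t| ≤ M) :
    ∃ (g : ℝ → ℝ) (E : Set ℝ), E.Countable ∧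
      ContDiffOn ℝ 1 g (Set.Ici (0:ℝ)) ∧
      (∀ t ∈ Set.Ici (0:ℝ) \ E, DifferentiableAt ℝ (deriv g) t) ∧
      (∀ t ≥ (0:ℝ), g t ≥ ξ (2 * t)) ∧
      (∀ t ≥ (0:ℝ), 0 < deriv g t) ∧
      Tendsto (deriv g) atTop atTop ∧
      (∃ K C : ℝ, ∀ t ∈ Set.Ici (0:ℝ) \ E, t ≥ K →
        |deriv (deriv g) t| ≤ C * (deriv g t) ^ 2) := by
  -- Local bounds for ξ on [0, j]
  obtain ⟨M, hM⟩ : ∃ M : ℕ → ℝ, ∀ j : ℕ, ∀ t ∈ Set.Icc (0:ℝ) (j:ℝ), |ξ t| ≤ M j :=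
    ⟨fun j => (hξ (j:ℝ) (Nat.cast_nonneg j)).choose,
     fun j => (hξ (j:ℝ) (Nat.cast_nonneg j)).choose_spec⟩
  -- Target slopes
  set c : ℕ → ℝ := fun n => (n+1 : ℝ) + ∑ k ∈ Finset.range (2*n+5), |M k| with hc
  have hsum_nonneg : ∀ n : ℕ, 0 ≤ ∑ k ∈ Finset.range (2*n+5), |M k| :=
    fun n => Finset.sum_nonneg fun k _ => abs_nonneg _
  have hc1 : ∀ n, (1:ℝ) ≤ c n := fun n => by
    have h1 := hsum_nonneg n
    have h2 : (0:ℝ) ≤ (n:ℝ) := Nat.cast_nonneg n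
    simp only [hc]; linarith
  have hcpos : ∀ n, (0:ℝ) < c n := fun n => lt_of_lt_of_le one_pos (hc1 n)
  have hcn : ∀ n : ℕ, (n:ℝ) + 1 ≤ c n := fun n => by
    have := hsum_nonneg n; simp only [hc]; linarith
  have hcmono : ∀ n, c n ≤ c (n+1) := fun n => by
    simp only [hc]
    have h2 : ∑ k ∈ Finset.range (2*n+5), |M k| ≤ ∑ k ∈ Finset.range (2*(n+1)+5), |M k| := by
      apply Finset.sum_le_sum_of_subset_of_nonneg
      · apply Finset.range_subset_range.mpr; omega
      · intro k _ _; exact abs_nonneg _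
    push_cast
    linarith
  have hMc : ∀ j m : ℕ, j < 2*m+5 → M j ≤ c m := by
    intro j m hj
    have h1 : |M j| ≤ ∑ k ∈ Finset.range (2*m+5), |M k| :=
      Finset.single_le_sum (fun k _ => abs_nonneg (M k)) (Finset.mem_range.mpr hj)
    have h2 : M j ≤ |M j| := le_abs_self _
    have h3 : (0:ℝ) ≤ (m:ℝ) + 1 := by positivity
    simp only [hc]; linarith
  -- differences of 1/c
  set d : ℕ → ℝ := fun n => (c n)⁻¹ - (c (n+1))⁻¹ with hd
  have hd0 : ∀ n, 0 ≤ d n := fun n =>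
    sub_nonneg.mpr (inv_anti₀ (hcpos n) (hcmono n))
  have hd1 : ∀ n, d n ≤ 1 := fun n => by
    have h1 : (c n)⁻¹ ≤ 1 := by
      rw [inv_le_one_iff₀]; right; exact hc1 n
    have h2 : 0 ≤ (c (n+1))⁻¹ := inv_nonneg.mpr (hcpos (n+1)).le
    simp only [hd]; linarith
  have hdsum : Summable d := by
    apply summable_of_sum_range_le hd0 (c := (c 0)⁻¹)
    intro n
    have he : ∑ i ∈ Finset.range n, d i = (c 0)⁻¹ - (c n)⁻¹ :=
      Finset.sum_range_sub' (fun k => (c k)⁻¹) n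
    rw [he]
    have : 0 ≤ (c n)⁻¹ := inv_nonneg.mpr (hcpos n).le
    linarith
  -- ramp function
  set ramp : ℝ → ℝ := fun x => max 0 (min x 1) with hramp
  have hramp_mem : ∀ x, ramp x ∈ Set.Icc (0:ℝ) 1 := fun x =>
    ⟨le_max_left _ _, max_le (by norm_num) (min_le_right _ _)⟩
  have hramp0 : ∀ x ≤ (0:ℝ), ramp x = 0 := fun x hx => by
    simp only [hramp]; rw [max_eq_left]; exact le_trans (min_le_left _ _) hx
  have hramp1 : ∀ x, (1:ℝ) ≤ x → ramp x = 1 := fun x hx => by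
    simp only [hramp]; rw [min_eq_right hx, max_eq_right (by norm_num)]
  have hramp_id : ∀ x ∈ Set.Icc (0:ℝ) 1, ramp x = x := fun x hx => by
    simp only [hramp]; rw [min_eq_left hx.2, max_eq_right hx.1]
  have hramp_cont : Continuous ramp :=
    continuous_const.max (continuous_id.min continuous_const)
  -- the function h
  set h : ℝ → ℝ := fun t => (c 0)⁻¹ - ∑' n : ℕ, d n * ramp (t - n) with hh
  have hterm_nonneg : ∀ (t : ℝ) (n : ℕ), 0 ≤ d n * ramp (t - n) :=
    fun t n => mul_nonneg (hd0 n) (hramp_mem _).1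
  have hterm_le : ∀ (t : ℝ) (n : ℕ), d n * ramp (t - n) ≤ d n :=
    fun t n => mul_le_of_le_one_right (hd0 n) (hramp_mem _).2
  -- formula on [n, n+1]
  have hform : ∀ n : ℕ, ∀ t ∈ Set.Icc (n:ℝ) ((n:ℝ)+1),
      h t = (c n)⁻¹ - d n * (t - n) := by
    intro n t ht
    have hvanish : ∀ k ∉ Finset.range (n+1), d k * ramp (t - k) = 0 := by
      intro k hk
      have hk' : n + 1 ≤ k := by simpa [Finset.mem_range] using hk
      have hle : t - k ≤ 0 := by
        have : ((n:ℝ)+1) ≤ (k:ℝ) := by exact_mod_cast hk'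
        linarith [ht.2]
      rw [hramp0 _ hle, mul_zero]
    have hts : ∑' k : ℕ, d k * ramp (t - k) = ∑ k ∈ Finset.range (n+1), d k * ramp (t - k) :=
      tsum_eq_sum hvanish
    have hsplit : ∑ k ∈ Finset.range (n+1), d k * ramp (t - k)
        = (∑ k ∈ Finset.range n, d k) + d n * (t - n) := by
      rw [Finset.sum_range_succ]
      congr 1
      · apply Finset.sum_congr rfl
        intro k hk
        have hk' : k < n := Finset.mem_range.mp hk
        have h1 : (1:ℝ) ≤ t - k := by
          have : (k:ℝ) + 1 ≤ (n:ℝ) := by exact_mod_cast Nat.succ_le_of_lt hk'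
          linarith [ht.1]
        rw [hramp1 _ h1, mul_one]
      · rw [hramp_id _ ⟨by linarith [ht.1], by linarith [ht.2]⟩]
    have htel : ∑ k ∈ Finset.range n, d k = (c 0)⁻¹ - (c n)⁻¹ :=
      Finset.sum_range_sub' (fun k => (c k)⁻¹) n
    simp only [hh]
    rw [hts, hsplit, htel]; ring
  have hneg : ∀ t ≤ (0:ℝ), h t = (c 0)⁻¹ := by
    intro t ht
    simp only [hh]
    have hz : ∀ n : ℕ, d n * ramp (t - n) = 0 := by
      intro n
      have : t - n ≤ 0 := by
        have : (0:ℝ) ≤ (n:ℝ) := Nat.cast_nonneg n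
        linarith
      rw [hramp0 _ this, mul_zero]
    rw [tsum_congr hz, tsum_zero, sub_zero]
  -- bounds on h
  have hh_ub : ∀ n : ℕ, ∀ t ∈ Set.Icc (n:ℝ) ((n:ℝ)+1), h t ≤ (c n)⁻¹ := by
    intro n t ht
    rw [hform n t ht]
    exact sub_le_self _ (mul_nonneg (hd0 n) (by linarith [ht.1]))
  have hh_lb : ∀ n : ℕ, ∀ t ∈ Set.Icc (n:ℝ) ((n:ℝ)+1), (c (n+1))⁻¹ ≤ h t := by
    intro n t ht
    rw [hform n t ht]
    have h1 : d n * (t - n) ≤ d n := mul_le_of_le_one_right (hd0 n) (by linarith [ht.2])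
    simp only [hd] at h1 ⊢
    linarith
  have hfloor_mem : ∀ t : ℝ, 0 ≤ t → t ∈ Set.Icc ((⌊t⌋₊:ℝ)) ((⌊t⌋₊:ℝ)+1) :=
    fun t ht => ⟨Nat.floor_le ht, (Nat.lt_floor_add_one t).le⟩
  have hh_pos : ∀ t : ℝ, 0 < h t := by
    intro t
    rcases le_or_gt t 0 with ht | ht
    · rw [hneg t ht]; exact inv_pos.mpr (hcpos 0)
    · exact lt_of_lt_of_le (inv_pos.mpr (hcpos _)) (hh_lb ⌊t⌋₊ t (hfloor_mem t ht.le))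
  have hh_cont : Continuous h := by
    apply continuous_const.sub
    apply continuous_tsum (u := d)
    · intro n
      exact continuous_const.mul (hramp_cont.comp (continuous_id.sub continuous_const))
    · exact hdsum
    · intro n x
      rw [Real.norm_eq_abs, abs_of_nonneg (hterm_nonneg x n)]
      exact hterm_le x n
  -- the derivative function f = 1/h
  set f : ℝ → ℝ := fun t => (h t)⁻¹ with hf
  have hf_pos : ∀ t, 0 < f t := fun t => inv_pos.mpr (hh_pos t)
  have hf_cont : Continuous f := hh_cont.inv₀ fun t => (hh_pos t).ne'
  have hf_lb : ∀ n : ℕ, ∀ t ∈ Set.Icc (n:ℝ) ((n:ℝ)+1), c n ≤ f t := by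
    intro n t ht
    have := inv_anti₀ (hh_pos t) (hh_ub n t ht)
    rwa [inv_inv] at this
  -- the function g
  set g : ℝ → ℝ := fun t => c 0 + ∫ s in (0:ℝ)..t, f s with hg
  have hgd : ∀ t : ℝ, HasDerivAt g (f t) t := by
    intro t
    exact (intervalIntegral.integral_hasDerivAt_right (hf_cont.intervalIntegrable _ _)
      (hf_cont.stronglyMeasurableAtFilter _ _) hf_cont.continuousAt).const_add (c 0)
  have hg' : deriv g = f := funext fun t => (hgd t).deriv
  refine ⟨g, Set.range ((↑) : ℕ → ℝ), Set.countable_range _, ?_, ?_, ?_, ?_, ?_, 0, 1, ?_⟩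
  · -- C¹
    apply ContDiff.contDiffOn
    rw [contDiff_one_iff_deriv]
    exact ⟨fun t => (hgd t).differentiableAt, hg' ▸ hf_cont⟩
  · -- second differentiability off E
    rintro t ⟨ht0, htE⟩
    rw [hg']
    set n := ⌊t⌋₊ with hn
    have hlt1 : (n:ℝ) < t :=
      lt_of_le_of_ne (Nat.floor_le ht0) fun e => htE ⟨n, e⟩
    have hlt2 : t < (n:ℝ) + 1 := Nat.lt_floor_add_one t
    have hmem : Set.Ioo ((n:ℝ)) ((n:ℝ)+1) ∈ 𝓝 t := Ioo_mem_nhds hlt1 hlt2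
    have heq : h =ᶠ[𝓝 t] fun x => (c n)⁻¹ - d n * (x - n) :=
      eventually_of_mem hmem fun x hx => hform n x ⟨hx.1.le, hx.2.le⟩
    have hda : HasDerivAt h (-d n) t := by
      have base : HasDerivAt (fun x : ℝ => (c n)⁻¹ - d n * (x - (n:ℝ))) (-d n) t := by
        have h1 : HasDerivAt (fun x : ℝ => d n * (x - (n:ℝ))) (d n) t := by
          simpa using ((hasDerivAt_id t).sub_const ((n:ℝ))).const_mul (d n)
        simpa using h1.const_sub ((c n)⁻¹)
      exact base.congr_of_eventuallyEq heq
    exact (hda.inv (hh_pos t).ne').differentiableAt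
  · -- domination of ξ
    intro t ht
    set n := ⌊t⌋₊ with hn
    have htmem := hfloor_mem t ht
    have hξ2 : ξ (2*t) ≤ M (2*n+2) := by
      refine le_trans (le_abs_self _) (hM (2*n+2) (2*t) ⟨by linarith, ?_⟩)
      have : t ≤ (n:ℝ) + 1 := htmem.2
      push_cast
      linarith
    have hint_nonneg : ∀ a b : ℝ, a ≤ b → 0 ≤ ∫ s in a..b, f s := fun a b hab =>
      intervalIntegral.integral_nonneg hab fun s _ => (hf_pos s).le
    rcases Nat.eq_zero_or_pos n with hn0 | hnpos
    · have hMle : M (2*n+2) ≤ c 0 := by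
        rw [hn0] at *
        exact hMc 2 0 (by norm_num)
      have : 0 ≤ ∫ s in (0:ℝ)..t, f s := hint_nonneg 0 t ht
      simp only [hg]
      rw [hn0] at hMle
      simp only [hn0] at hξ2
      linarith [hξ2, hMle]
    · obtain ⟨m, hm⟩ : ∃ m : ℕ, n = m + 1 := ⟨n - 1, by omega⟩
      have hMle : M (2*n+2) ≤ c m := by
        rw [hm]; exact hMc (2*(m+1)+2) m (by omega)
      have hmt : ((m:ℝ)) + 1 ≤ t := by
        have : ((n:ℝ)) ≤ t := htmem.1
        rw [hm] at this; push_cast at this; linarith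
      have hI1 : (∫ s in (m:ℝ)..((m:ℝ)+1), f s) ≤ ∫ s in (0:ℝ)..t, f s := by
        apply intervalIntegral.integral_mono_interval (by positivity) (by linarith) hmt
        · filter_upwards with s using (hf_pos s).le
        · exact hf_cont.intervalIntegrable _ _
      have hI2 : c m ≤ ∫ s in (m:ℝ)..((m:ℝ)+1), f s := by
        have hconst : (∫ _ in (m:ℝ)..((m:ℝ)+1), c m) = c m := by
          simp
        rw [← hconst]
        apply intervalIntegral.integral_mono_on (by linarith)
          (intervalIntegrable_const) (hf_cont.intervalIntegrable _ _)
        intro x hx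
        exact hf_lb m x hx
      simp only [hg]
      have hc0 : (0:ℝ) < c 0 := hcpos 0
      linarith
  · -- positivity of deriv g
    intro t _
    rw [hg']
    exact hf_pos t
  · -- tendsto atTop
    rw [hg']
    apply tendsto_atTop_mono _ tendsto_id
    intro t
    rcases le_or_gt t 0 with ht | ht
    · exact le_trans ht (hf_pos t).le
    · have h1 : t < (⌊t⌋₊:ℝ) + 1 := Nat.lt_floor_add_one t
      have h2 : c ⌊t⌋₊ ≤ f t := hf_lb ⌊t⌋₊ t (hfloor_mem t ht.le)
      have h3 := hcn ⌊t⌋₊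
      simp only [id]
      linarith
  · -- second derivative bound
    rintro t ⟨ht0, htE⟩ _
    rw [hg']
    set n := ⌊t⌋₊ with hn
    have hlt1 : (n:ℝ) < t :=
      lt_of_le_of_ne (Nat.floor_le ht0) fun e => htE ⟨n, e⟩
    have hlt2 : t < (n:ℝ) + 1 := Nat.lt_floor_add_one t
    have hmem : Set.Ioo ((n:ℝ)) ((n:ℝ)+1) ∈ 𝓝 t := Ioo_mem_nhds hlt1 hlt2
    have heq : h =ᶠ[𝓝 t] fun x => (c n)⁻¹ - d n * (x - n) :=
      eventually_of_mem hmem fun x hx => hform n x ⟨hx.1.le, hx.2.le⟩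
    have hda : HasDerivAt h (-d n) t := by
      have base : HasDerivAt (fun x : ℝ => (c n)⁻¹ - d n * (x - (n:ℝ))) (-d n) t := by
        have h1 : HasDerivAt (fun x : ℝ => d n * (x - (n:ℝ))) (d n) t := by
          simpa using ((hasDerivAt_id t).sub_const ((n:ℝ))).const_mul (d n)
        simpa using h1.const_sub ((c n)⁻¹)
      exact base.congr_of_eventuallyEq heq
    have hfa : HasDerivAt f (d n / h t ^ 2) t := by
      have := hda.inv (hh_pos t).ne'
      rw [neg_neg] at this
      exact this
    rw [hfa.deriv]
    have hnn : 0 ≤ d n / h t ^ 2 := div_nonneg (hd0 n) (sq_nonneg _)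
    rw [abs_of_nonneg hnn]
    have hrw : d n / h t ^ 2 = d n * f t ^ 2 := by
      simp only [hf]
      rw [div_eq_mul_inv, ← inv_pow]
    rw [hrw, one_mul]
    have : f t ^ 2 ≤ f t ^ 2 := le_rfl
    nlinarith [hd1 n, sq_nonneg (f t), hd0 n]
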